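/- For effects E, F on a Hilbert space, the infimum λ₀ of Λ(E,F) = {λ ∈ ℝ | ∃ effect G with G ≤ E, G ≤ F, E + F ≤ G + λI} is attained: λ₀ ∈ Λ(E,F). -/

import Mathlib

open ContinuousLinearMap Filter Topology Metric
open scoped InnerProductSpace ComplexConjugate

section Aux

variable {H : Type*} [NormedAddCommGroup H] [InnerProductSpace ℂ H] [CompleteSpace H]

local notation "⟪" x ", " y "⟫" => @inner ℂ _ _ x y

private lemma aux_inner_smul_real (r : ℝ) (x y : H) : ⟪x, r • y⟫ = (r : ℂ) * ⟪x, y⟫ := by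
  rw [RCLike.real_smul_eq_coe_smul (K := ℂ), inner_smul_right]
  rfl

private lemma aux_sa_swap {G : H →L[ℂ] H} (hG : IsSelfAdjoint G) (x y : H) :
    ⟪G x, y⟫ = ⟪x, G y⟫ := by
  conv_lhs => rw [← (ContinuousLinearMap.isSelfAdjoint_iff'.mp hG)]
  exact ContinuousLinearMap.adjoint_inner_left G y x

private lemma aux_smul_one_pos {r : ℝ} (hr : 0 ≤ r) :
    ((r • (1 : H →L[ℂ] H))).IsPositive := by
  constructor
  · exact ContinuousLinearMap.isSelfAdjoint_iff_isSymmetric.mp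
      ((IsSelfAdjoint.all r).smul (IsSelfAdjoint.one (H →L[ℂ] H)))
  · intro x
    show 0 ≤ RCLike.re ⟪(r • (1 : H →L[ℂ] H)) x, x⟫
    rw [ContinuousLinearMap.smul_apply, ContinuousLinearMap.one_apply,
      RCLike.real_smul_eq_coe_smul (K := ℂ), inner_smul_left]
    simp only [RCLike.conj_ofReal, RCLike.re_ofReal_mul]
    exact mul_nonneg hr inner_self_nonneg

private lemma effect_inner_bound {G : H →L[ℂ] H} (hG : G.IsPositive)
    (hG1 : (1 - G).IsPositive) (x y : H) : ‖⟪x, G y⟫‖ ≤ ‖x‖ * ‖y‖ := by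
  have swap : ∀ a b : H, ⟪G a, b⟫ = ⟪a, G b⟫ := aux_sa_swap hG.isSelfAdjoint
  let c : PreInnerProductSpace.Core ℂ H :=
    { inner := fun a b => ⟪a, G b⟫
      conj_inner_symm := fun a b => by
        show (starRingEnd ℂ) ⟪b, G a⟫ = ⟪a, G b⟫
        rw [inner_conj_symm, swap]
      re_inner_nonneg := fun a => hG.re_inner_nonneg_right a
      add_left := fun a b z => by
        show ⟪a + b, G z⟫ = ⟪a, G z⟫ + ⟪b, G z⟫
        rw [inner_add_left]
      smul_left := fun a b r => by
        show ⟪r • a, G b⟫ = (starRingEnd ℂ) r * ⟪a, G b⟫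
        rw [inner_smul_left] }
  have key : ‖⟪x, G y⟫‖ * ‖⟪y, G x⟫‖ ≤ RCLike.re ⟪x, G x⟫ * RCLike.re ⟪y, G y⟫ :=
    InnerProductSpace.Core.inner_mul_inner_self_le (𝕜 := ℂ) (F := H) (c := c) x y
  have hbd : ∀ a : H, RCLike.re ⟪a, G a⟫ ≤ ‖a‖ * ‖a‖ := by
    intro a
    have h0 := hG1.re_inner_nonneg_right a
    have h1 : ⟪a, (1 - G) a⟫ = ⟪a, a⟫ - ⟪a, G a⟫ := by
      simp [ContinuousLinearMap.sub_apply, inner_sub_right]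
    rw [h1, map_sub] at h0
    have h2 := inner_self_eq_norm_mul_norm (𝕜 := ℂ) a
    linarith
  have hsymm : ‖⟪y, G x⟫‖ = ‖⟪x, G y⟫‖ := by
    have h3 : (starRingEnd ℂ) ⟪y, G x⟫ = ⟪x, G y⟫ := by rw [inner_conj_symm, swap]
    rw [← h3, RCLike.norm_conj]
  have hx := hG.re_inner_nonneg_right x
  have hy := hG.re_inner_nonneg_right y
  have hsq : ‖⟪x, G y⟫‖ * ‖⟪x, G y⟫‖ ≤ (‖x‖ * ‖y‖) * (‖x‖ * ‖y‖) := by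
    rw [hsymm] at key
    nlinarith [hbd x, hbd y, norm_nonneg x, norm_nonneg y]
  nlinarith [norm_nonneg (⟪x, G y⟫), mul_nonneg (norm_nonneg x) (norm_nonneg y)]

private lemma exists_wot_limit (U : Ultrafilter ℕ) (G : ℕ → H →L[ℂ] H)
    (hb : ∀ n x y, ‖⟪x, G n y⟫‖ ≤ ‖x‖ * ‖y‖) :
    ∃ T : H →L[ℂ] H, ∀ x y,
      Tendsto (fun n => ⟪x, G n y⟫) (U : Filter ℕ) (𝓝 ⟪x, T y⟫) := by
  have hex : ∀ x y : H, ∃ z : ℂ, Tendsto (fun n => ⟪x, G n y⟫) (U : Filter ℕ) (𝓝 z) := by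
    intro x y
    obtain ⟨z, -, hz⟩ := (isCompact_closedBall (0 : ℂ) (‖x‖ * ‖y‖)).ultrafilter_le_nhds
      (U.map fun n => ⟪x, G n y⟫)
      (by
        rw [Ultrafilter.coe_map, Filter.le_principal_iff, Filter.mem_map]
        exact Filter.univ_mem'
          (fun n => by simpa [mem_closedBall_zero_iff] using hb n x y))
    exact ⟨z, by rwa [Ultrafilter.coe_map] at hz⟩
  choose L hL using hex
  have addl : ∀ (x x' y : H), L (x + x') y = L x y + L x' y := fun x x' y =>
    tendsto_nhds_unique (hL (x + x') y)
      (by simpa [inner_add_left] using (hL x y).add (hL x' y))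
  have smull : ∀ (r : ℂ) (x y : H), L (r • x) y = (starRingEnd ℂ) r * L x y := fun r x y =>
    tendsto_nhds_unique (hL (r • x) y)
      (by simpa [inner_smul_left, mul_comm] using (hL x y).const_mul ((starRingEnd ℂ) r))
  have addr : ∀ (x y y' : H), L x (y + y') = L x y + L x y' := fun x y y' =>
    tendsto_nhds_unique (hL x (y + y'))
      (by simpa [inner_add_right] using (hL x y).add (hL x y'))
  have smulr : ∀ (r : ℂ) (x y : H), L x (r • y) = r * L x y := fun r x y =>
    tendsto_nhds_unique (hL x (r • y))
      (by simpa [inner_smul_right] using (hL x y).const_mul r)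
  have hLb : ∀ x y, ‖L x y‖ ≤ ‖x‖ * ‖y‖ := fun x y =>
    le_of_tendsto (hL x y).norm (Filter.Eventually.of_forall fun n => hb n x y)
  let φ : H → (H →L[ℂ] ℂ) := fun y => LinearMap.mkContinuous
    { toFun := fun x => (starRingEnd ℂ) (L x y)
      map_add' := fun x x' => by
        show (starRingEnd ℂ) (L (x + x') y) = _
        rw [addl]; exact map_add _ _ _
      map_smul' := fun r x => by
        show (starRingEnd ℂ) (L (r • x) y) = _
        rw [smull]; simp }
    ‖y‖ (fun x => by
      show ‖(starRingEnd ℂ) (L x y)‖ ≤ ‖y‖ * ‖x‖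
      rw [RCLike.norm_conj]
      calc ‖L x y‖ ≤ ‖x‖ * ‖y‖ := hLb x y
        _ = ‖y‖ * ‖x‖ := mul_comm _ _)
  let f : H → H := fun y => (InnerProductSpace.toDual ℂ H).symm (φ y)
  have hf : ∀ x y, ⟪x, f y⟫ = L x y := by
    intro x y
    have h1 : ⟪f y, x⟫ = (starRingEnd ℂ) (L x y) := InnerProductSpace.toDual_symm_apply
    rw [← inner_conj_symm, h1]
    exact Complex.conj_conj _
  have hfb : ∀ y, ‖f y‖ ≤ ‖y‖ := by
    intro y
    have h1 : ‖f y‖ = ‖φ y‖ := LinearIsometryEquiv.norm_map _ _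
    rw [h1]
    exact LinearMap.mkContinuous_norm_le _ (norm_nonneg y) _
  refine ⟨LinearMap.mkContinuous
    { toFun := f
      map_add' := fun y y' => ext_inner_left ℂ fun v => by
        rw [hf, inner_add_right, hf, hf, addr]
      map_smul' := fun r y => ext_inner_left ℂ fun v => by
        rw [hf, inner_smul_right, hf, smulr]; rfl }
    1 (fun y => by simpa using hfb y), fun x y => ?_⟩
  have h2 := hL x y
  rwa [← hf x y] at h2

private lemma isPositive_of_tendsto (U : Ultrafilter ℕ) (c : ℕ → H →L[ℂ] H)
    (T : H →L[ℂ] H) (hc : ∀ n, (c n).IsPositive)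
    (h : ∀ x, Tendsto (fun n => ⟪x, c n x⟫) (U : Filter ℕ) (𝓝 ⟪x, T x⟫)) :
    T.IsPositive := by
  rw [ContinuousLinearMap.isPositive_iff_complex]
  intro x
  have hC : IsClosed {z : ℂ | 0 ≤ z.re ∧ z.im = 0} :=
    (isClosed_le continuous_const Complex.continuous_re).inter
      (isClosed_eq Complex.continuous_im continuous_const)
  have hmem : ∀ n, ⟪x, c n x⟫ ∈ {z : ℂ | 0 ≤ z.re ∧ z.im = 0} := by
    intro n
    obtain ⟨h1, h2⟩ := (ContinuousLinearMap.isPositive_iff_complex (c n)).mp (hc n) x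
    have h3 : ⟪x, c n x⟫ = ((RCLike.re ⟪c n x, x⟫ : ℝ) : ℂ) := by
      rw [← inner_conj_symm, ← h1]
      simp [Complex.conj_ofReal]
    rw [h3]
    exact ⟨by simpa using h2, by simp⟩
  have hlim : ⟪x, T x⟫ ∈ {z : ℂ | 0 ≤ z.re ∧ z.im = 0} :=
    hC.mem_of_tendsto (h x) (Filter.Eventually.of_forall hmem)
  have hsw : ⟪T x, x⟫ = (starRingEnd ℂ) ⟪x, T x⟫ := (inner_conj_symm _ _).symm
  obtain ⟨hre, him⟩ := hlim
  have hreal : ⟪x, T x⟫ = (((⟪x, T x⟫ : ℂ).re : ℝ) : ℂ) := by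
    apply Complex.ext <;> simp [him]
  constructor
  · rw [hsw, hreal]
    simp [Complex.conj_ofReal]
  · rw [inner_re_symm]
    simpa using hre

end Aux

/-- For effects `E, F` on a complex Hilbert space, the infimum of
`Λ(E,F) = {λ | ∃ effect G, G ≤ E, G ≤ F, E + F ≤ G + λI}` (Loewner order) is attained. -/
theorem inf_lambda_attained {H : Type*} [NormedAddCommGroup H] [InnerProductSpace ℂ H]
    [CompleteSpace H] (E F : H →L[ℂ] H)
    (hE : E.IsPositive) (hE1 : (1 - E).IsPositive)
    (hF : F.IsPositive) (hF1 : (1 - F).IsPositive) :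
    sInf {l : ℝ | ∃ G : H →L[ℂ] H, (G.IsPositive ∧ (1 - G).IsPositive) ∧
        (E - G).IsPositive ∧ (F - G).IsPositive ∧ ((G + l • 1) - (E + F)).IsPositive} ∈
      {l : ℝ | ∃ G : H →L[ℂ] H, (G.IsPositive ∧ (1 - G).IsPositive) ∧
        (E - G).IsPositive ∧ (F - G).IsPositive ∧ ((G + l • 1) - (E + F)).IsPositive} := by
  rcases subsingleton_or_nontrivial H with hsub | hnt
  · have hzero : ∀ T : H →L[ℂ] H, T.IsPositive := fun T => by
      have : T = 0 := by ext x; exact Subsingleton.elim _ _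
      rw [this]; exact isPositive_zero
    exact ⟨0, ⟨hzero _, hzero _⟩, hzero _, hzero _, hzero _⟩
  · set S := {l : ℝ | ∃ G : H →L[ℂ] H, (G.IsPositive ∧ (1 - G).IsPositive) ∧
        (E - G).IsPositive ∧ (F - G).IsPositive ∧ ((G + l • 1) - (E + F)).IsPositive}
      with hSdef
    have h2 : (2 : ℝ) ∈ S := by
      refine ⟨0, ⟨isPositive_zero, by simpa using isPositive_one⟩,
        by simpa using hE, by simpa using hF, ?_⟩
      have hrw : ((0 : H →L[ℂ] H) + (2 : ℝ) • 1) - (E + F) = (1 - E) + (1 - F) := by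
        module
      rw [hrw]; exact hE1.add hF1
    have hne : S.Nonempty := ⟨2, h2⟩
    have hbdd : BddBelow S := by
      refine ⟨0, fun l hl => ?_⟩
      obtain ⟨G, ⟨hG, _⟩, hEG, hFG, hl'⟩ := hl
      obtain ⟨u, hu⟩ : ∃ u : H, ‖u‖ = 1 := by
        obtain ⟨x, hx⟩ := exists_ne (0 : H)
        exact ⟨‖x‖⁻¹ • x, norm_smul_inv_norm hx⟩
      have e1 := hG.re_inner_nonneg_right u
      have e2 := hEG.re_inner_nonneg_right u
      have e3 := hFG.re_inner_nonneg_right u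
      have e4 := hl'.re_inner_nonneg_right u
      simp only [ContinuousLinearMap.sub_apply, ContinuousLinearMap.add_apply,
        ContinuousLinearMap.smul_apply, ContinuousLinearMap.one_apply,
        inner_sub_right, inner_add_right, map_sub, map_add] at e2 e3 e4
      rw [aux_inner_smul_real] at e4
      have e5 : RCLike.re ((l : ℂ) * ⟪u, u⟫_ℂ) = l * RCLike.re ⟪u, u⟫_ℂ :=
        RCLike.re_ofReal_mul l ⟪u, u⟫_ℂ
      rw [e5, inner_self_eq_norm_mul_norm, hu] at e4
      simp only [mul_one] at e4
      linarith
    have hmem : ∀ n : ℕ, ∃ G : H →L[ℂ] H, (G.IsPositive ∧ (1 - G).IsPositive) ∧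
        (E - G).IsPositive ∧ (F - G).IsPositive ∧
        ((G + (sInf S + ((n : ℝ) + 1)⁻¹) • 1) - (E + F)).IsPositive := by
      intro n
      obtain ⟨m, hm, hlt⟩ := Real.lt_sInf_add_pos hne
        (ε := ((n : ℝ) + 1)⁻¹) (by positivity)
      obtain ⟨G, hG1, hG2, hG3, hG4⟩ := hm
      refine ⟨G, hG1, hG2, hG3, ?_⟩
      have hid : (G + (sInf S + ((n : ℝ) + 1)⁻¹) • 1) - (E + F)
          = ((G + m • 1) - (E + F)) + ((sInf S + ((n : ℝ) + 1)⁻¹ - m) • 1) := by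
        module
      rw [hid]
      exact hG4.add (aux_smul_one_pos (by linarith))
    choose Gs hGs using hmem
    set U := Ultrafilter.of (Filter.atTop : Filter ℕ) with hU
    have hUle : (U : Filter ℕ) ≤ Filter.atTop := Ultrafilter.of_le _
    have hb : ∀ n x y, ‖⟪x, Gs n y⟫_ℂ‖ ≤ ‖x‖ * ‖y‖ := fun n =>
      effect_inner_bound (hGs n).1.1 (hGs n).1.2
    obtain ⟨T, hT⟩ := exists_wot_limit U Gs hb
    refine ⟨T, ⟨?_, ?_⟩, ?_, ?_, ?_⟩
    · exact isPositive_of_tendsto U Gs T (fun n => (hGs n).1.1) (fun x => hT x x)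
    · refine isPositive_of_tendsto U (fun n => 1 - Gs n) (1 - T)
        (fun n => (hGs n).1.2) (fun x => ?_)
      have := (tendsto_const_nhds (x := ⟪x, x⟫_ℂ) (f := (U : Filter ℕ))).sub (hT x x)
      simpa [ContinuousLinearMap.sub_apply, ContinuousLinearMap.one_apply,
        inner_sub_right] using this
    · refine isPositive_of_tendsto U (fun n => E - Gs n) (E - T)
        (fun n => (hGs n).2.1) (fun x => ?_)
      have := (tendsto_const_nhds (x := ⟪x, E x⟫_ℂ) (f := (U : Filter ℕ))).sub (hT x x)
      simpa [ContinuousLinearMap.sub_apply, inner_sub_right] using this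
    · refine isPositive_of_tendsto U (fun n => F - Gs n) (F - T)
        (fun n => (hGs n).2.2.1) (fun x => ?_)
      have := (tendsto_const_nhds (x := ⟪x, F x⟫_ℂ) (f := (U : Filter ℕ))).sub (hT x x)
      simpa [ContinuousLinearMap.sub_apply, inner_sub_right] using this
    · refine isPositive_of_tendsto U
        (fun n => (Gs n + (sInf S + ((n : ℝ) + 1)⁻¹) • 1) - (E + F))
        ((T + sInf S • 1) - (E + F)) (fun n => (hGs n).2.2.2) (fun x => ?_)
      have hconst : Tendsto (fun n : ℕ => ((sInf S + ((n : ℝ) + 1)⁻¹ : ℝ) : ℂ))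
          Filter.atTop (𝓝 ((sInf S : ℝ) : ℂ)) := by
        have h1 : Tendsto (fun n : ℕ => sInf S + ((n : ℝ) + 1)⁻¹) Filter.atTop
            (𝓝 (sInf S + 0)) := by
          refine tendsto_const_nhds.add ?_
          simpa [one_div] using tendsto_one_div_add_atTop_nhds_zero_nat (𝕜 := ℝ)
        rw [add_zero] at h1
        exact (Complex.continuous_ofReal.tendsto _).comp h1
      have := ((hT x x).add
          ((hconst.mono_left hUle).mul
            (tendsto_const_nhds (x := ⟪x, x⟫_ℂ) (f := (U : Filter ℕ))))).sub
        (tendsto_const_nhds (x := ⟪x, (E + F) x⟫_ℂ) (f := (U : Filter ℕ)))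
      simpa [ContinuousLinearMap.sub_apply, ContinuousLinearMap.add_apply,
        ContinuousLinearMap.smul_apply, ContinuousLinearMap.one_apply,
        inner_sub_right, inner_add_right, aux_inner_smul_real] using this
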